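/- arXiv:1702.03101 — 4 statements merged into one kernel-verified Lean document; each statement's English description precedes it below -/
import Mathlib

section
/- If a scheduled Boolean automata network (F', W') on n+k automata id-simulates (F, [V]) where F: B^n → B^n and [V] is the parallel update schedule on V = {0,...,n-1}, then k ≥ ⌈log₂(χ(G_NECC(F,W)))⌉, where G_NECC(F,W) is the graph on vertex set B^n with edges between pairs (x,x') such that F(x) ≠ F(x') and there exists i with F_{W_{<i}}(x) = F_{W_{<i}}(x'). -/
/-- A configuration of a Boolean automata network of size `n`. -/
abbrev Conf (n : ℕ) := Fin n → Bool

/-- `F_I`: update simultaneously exactly the automata in `I`. -/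
def updSet {n : ℕ} (F : Conf n → Conf n) (I : Finset (Fin n)) (x : Conf n) : Conf n :=
  fun i => if i ∈ I then F x i else x i

/-- `W_{<j}`: union of the first `j` blocks of the schedule `W`. -/
def prefUnion {n : ℕ} (W : List (Finset (Fin n))) (j : ℕ) : Finset (Fin n) :=
  (W.take j).foldr (· ∪ ·) ∅

/-- `W` is a block-sequential update schedule: an ordered partition of the automata. -/
def isSchedule {n : ℕ} (W : List (Finset (Fin n))) : Prop :=
  (∀ B ∈ W, B.Nonempty) ∧ W.Pairwise Disjoint ∧ W.foldr (· ∪ ·) ∅ = Finset.univ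

/-- Confusable configurations: identical after updating the first `i` blocks, some `i ∈ [0,p]`. -/
def confusable {n : ℕ} (F : Conf n → Conf n) (W : List (Finset (Fin n))) (x x' : Conf n) : Prop :=
  ∃ i ≤ W.length, updSet F (prefUnion W i) x = updSet F (prefUnion W i) x'

/-- `CC(x,x')`: the set of steps making `x` and `x'` confusable. -/
def CCset {n : ℕ} (F : Conf n → Conf n) (W : List (Finset (Fin n))) (x x' : Conf n) : Set ℕ :=
  {i | i ≤ W.length ∧ updSet F (prefUnion W i) x = updSet F (prefUnion W i) x'}

/-- The `G_NECC` graph: edges between non-equivalent confusable configurations. -/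
def gnecc {n : ℕ} (F : Conf n → Conf n) (W : List (Finset (Fin n))) :
    SimpleGraph (Conf n) where
  Adj x x' := F x ≠ F x' ∧ confusable F W x x'
  symm := ⟨by
    rintro x x' ⟨hne, i, hi, h⟩
    exact ⟨hne.symm, i, hi, h.symm⟩⟩
  loopless := ⟨by rintro x ⟨hne, _⟩; exact hne rfl⟩

/-- `F^W`: apply the blocks of `W` sequentially. -/
def runSched {n : ℕ} (F : Conf n → Conf n) (W : List (Finset (Fin n))) (x : Conf n) : Conf n :=
  W.foldl (fun y B => updSet F B y) x

/-- `W(i)`: the index of the block of `W` containing `i`. -/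
def stepOf {n : ℕ} (W : List (Finset (Fin n))) (i : Fin n) : ℕ :=
  W.findIdx (fun B => decide (i ∈ B))

/-- `W' ∈ E_h(W,V')`: `W'` extends `W`, preserving the update order via `h`. -/
def extendsSched {n m : ℕ} (W : List (Finset (Fin n))) (W' : List (Finset (Fin m)))
    (h : Fin n → Fin m) : Prop :=
  ∀ i i' : Fin n, (stepOf W i ≤ stepOf W i' ↔ stepOf W' (h i) ≤ stepOf W' (h i'))

/-- `(F',W')` `h`-simulates `(F,[V])`: `φ_h ∘ F'^{W'} = F ∘ φ_h`. -/
def simulates {n m : ℕ} (F' : Conf m → Conf m) (W' : List (Finset (Fin m)))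
    (F : Conf n → Conf n) (h : Fin n → Fin m) : Prop :=
  ∀ z : Conf m, (fun i => runSched F' W' z (h i)) = F (fun i => z (h i))

/-- `κ(F,W)`: minimal number of additional automata needed to simulate `(F,[V])`
with a schedule extending `W` order-preservingly. -/
noncomputable def kappa {n : ℕ} (F : Conf n → Conf n) (W : List (Finset (Fin n))) : ℕ :=
  sInf {k | ∃ h : Fin n → Fin (n + k), Function.Injective h ∧
    ∃ W' : List (Finset (Fin (n + k))), isSchedule W' ∧ extendsSched W W' h ∧
      ∃ F' : Conf (n + k) → Conf (n + k), simulates F' W' F h}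

/-- The simple sequential update schedule `({0},{1},…,{n-1})`. -/
def seqSched (n : ℕ) : List (Finset (Fin n)) := (List.finRange n).map (fun i => {i})

lemma mem_foldr_union {n : ℕ} {L : List (Finset (Fin n))} {a : Fin n} :
    a ∈ L.foldr (· ∪ ·) ∅ ↔ ∃ B ∈ L, a ∈ B := by
  induction L with
  | nil => simp
  | cons B L ih => simp [ih]

lemma runSched_of_not_mem {m : ℕ} (F' : Conf m → Conf m) (L : List (Finset (Fin m)))
    (z : Conf m) (a : Fin m) (h : ∀ B ∈ L, a ∉ B) : runSched F' L z a = z a := by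
  induction L generalizing z with
  | nil => rfl
  | cons B L ih =>
    have h1 : runSched F' (B :: L) z = runSched F' L (updSet F' B z) := rfl
    rw [h1, ih (updSet F' B z) (fun B' hB' => h B' (List.mem_cons_of_mem _ hB'))]
    simp [updSet, h B List.mem_cons_self]

lemma runSched_split {m : ℕ} (F' : Conf m → Conf m) (L : List (Finset (Fin m)))
    (t : ℕ) (z : Conf m) :
    runSched F' L z = runSched F' (L.drop t) (runSched F' (L.take t) z) := by
  unfold runSched
  rw [← List.foldl_append, List.take_append_drop]

lemma stepOf_lt_length {m : ℕ} {L : List (Finset (Fin m))} (hL : isSchedule L) (a : Fin m) :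
    stepOf L a < L.length := by
  apply List.findIdx_lt_length_of_exists
  have : a ∈ L.foldr (· ∪ ·) ∅ := hL.2.2 ▸ Finset.mem_univ a
  obtain ⟨B, hB, haB⟩ := mem_foldr_union.mp this
  exact ⟨B, hB, by simpa⟩

lemma mem_stepOf {m : ℕ} {L : List (Finset (Fin m))} (hL : isSchedule L) (a : Fin m) :
    a ∈ L[stepOf L a]'(stepOf_lt_length hL a) := by
  have := @List.findIdx_getElem _ (fun B => decide (a ∈ B)) L (stepOf_lt_length hL a)
  simp only [decide_eq_true_eq] at this
  exact this

lemma stepOf_unique {m : ℕ} {L : List (Finset (Fin m))} (hL : isSchedule L) {a : Fin m}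
    {j : ℕ} (hj : j < L.length) (ha : a ∈ L[j]) : j = stepOf L a := by
  by_contra hne
  have hs := stepOf_lt_length hL a
  have hmem := mem_stepOf hL a
  rcases Nat.lt_or_ge j (stepOf L a) with hlt | hge
  · have := @List.not_of_lt_findIdx _ (fun B => decide (a ∈ B)) L j hlt
    simp at this
    exact this ha
  · have hlt : stepOf L a < j := lt_of_le_of_ne hge (Ne.symm hne)
    have hd := (List.pairwise_iff_getElem.mp hL.2.1) _ _ hs hj hlt
    exact (Finset.disjoint_left.mp hd hmem) ha

lemma runSched_take_apply {m : ℕ} (F' : Conf m → Conf m) {L : List (Finset (Fin m))}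
    (hL : isSchedule L) (t : ℕ) (z : Conf m) (a : Fin m) :
    runSched F' (L.take t) z a = if stepOf L a < t then runSched F' L z a else z a := by
  split_ifs with hlt
  · rw [runSched_split F' L t z]
    symm
    apply runSched_of_not_mem
    intro B hB haB
    obtain ⟨j, hj, hBj⟩ := List.mem_iff_getElem.mp hB
    have hj2 : t + j < L.length := by
      have : (L.drop t).length = L.length - t := List.length_drop; omega
    have hBj' : B = L[t + j] := by
      rw [← hBj]; exact (List.getElem_drop ..).symm ▸ rfl
    have := stepOf_unique hL hj2 (hBj' ▸ haB)
    omega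
  · apply runSched_of_not_mem
    intro B hB haB
    obtain ⟨j, hj, hBj⟩ := List.mem_iff_getElem.mp hB
    have hjt : j < t := by simp [List.length_take] at hj; omega
    have hjlen : j < L.length := by simp [List.length_take] at hj; omega
    have hBj' : B = L[j] := by rw [← hBj]; exact (List.getElem_take ..).symm ▸ rfl
    have := stepOf_unique hL hjlen (hBj' ▸ haB)
    omega

lemma mem_prefUnion {n : ℕ} {W : List (Finset (Fin n))} (hW : isSchedule W) {i : ℕ}
    {a : Fin n} : a ∈ prefUnion W i ↔ stepOf W a < i := by
  unfold prefUnion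
  rw [mem_foldr_union]
  constructor
  · rintro ⟨B, hB, haB⟩
    obtain ⟨j, hj, hBj⟩ := List.mem_iff_getElem.mp hB
    have hji : j < i := by simp [List.length_take] at hj; omega
    have hjlen : j < W.length := by simp [List.length_take] at hj; omega
    have hBj' : B = W[j] := by rw [← hBj]; exact (List.getElem_take ..).symm ▸ rfl
    have := stepOf_unique hW hjlen (hBj' ▸ haB)
    omega
  · intro hlt
    refine ⟨W[stepOf W a]'(stepOf_lt_length hW a), ?_, mem_stepOf hW a⟩
    have hlen : stepOf W a < (W.take i).length := by
      simp [List.length_take]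
      exact ⟨hlt, stepOf_lt_length hW a⟩
    have : (W.take i)[stepOf W a]'hlen = W[stepOf W a]'(stepOf_lt_length hW a) :=
      List.getElem_take ..
    exact this ▸ List.getElem_mem hlen

theorem stmt0 {n k : ℕ} (F : Conf n → Conf n) (W : List (Finset (Fin n)))
    (hW : isSchedule W)
    (F' : Conf (n + k) → Conf (n + k)) (W' : List (Finset (Fin (n + k))))
    (hW' : isSchedule W') (hext : extendsSched W W' (Fin.castAdd k))
    (hsim : simulates F' W' F (Fin.castAdd k)) :
    Nat.clog 2 ((gnecc F W).chromaticNumber.toNat) ≤ k := by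
  classical
  set h : Fin n → Fin (n + k) := Fin.castAdd k with hh
  set ext : Conf n → Conf (n + k) :=
    fun x a => if hc : (a : ℕ) < n then x ⟨a, hc⟩ else false with hext0
  have hphi : ∀ x : Conf n, (fun i => ext x (h i)) = x := by
    intro x; funext i
    simp [hext0, hh, Fin.castAdd]
  set c : Conf n → (Fin k → Bool) :=
    fun x ℓ => runSched F' W' (ext x) (Fin.natAdd n ℓ) with hc0
  have hcol : ∀ x x', (gnecc F W).Adj x x' → c x ≠ c x' := by
    rintro x x' ⟨hFne, i, hi, hcf⟩ hcc
    apply hFne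
    have hP : ∀ j : Fin n, j ∈ prefUnion W i → F x j = F x' j := by
      intro j hj
      have := congrFun hcf j
      simpa [updSet, hj] using this
    have hQ : ∀ j : Fin n, j ∉ prefUnion W i → x j = x' j := by
      intro j hj
      have := congrFun hcf j
      simpa [updSet, hj] using this
    set P := prefUnion W i with hPdef
    set t : ℕ := P.sup (fun j => stepOf W' (h j) + 1) with htdef
    have hin : ∀ j : Fin n, j ∈ P → stepOf W' (h j) < t := fun j hj =>
      Nat.lt_of_succ_le (Finset.le_sup (f := fun j => stepOf W' (h j) + 1) hj)
    have hout : ∀ j : Fin n, j ∉ P → t ≤ stepOf W' (h j) := by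
      intro j hj
      apply Finset.sup_le
      intro j' hj'
      have h1 : stepOf W j' < i := (mem_prefUnion hW).mp hj'
      have h2 : ¬ stepOf W j < i := fun hc => hj ((mem_prefUnion hW).mpr hc)
      have h3 : ¬ (stepOf W j ≤ stepOf W j') := by omega
      have h4 : ¬ (stepOf W' (h j) ≤ stepOf W' (h j')) := fun hc => h3 ((hext j j').mpr hc)
      omega
    have hst : runSched F' (W'.take t) (ext x) = runSched F' (W'.take t) (ext x') := by
      funext a
      rw [runSched_take_apply F' hW', runSched_take_apply F' hW']
      by_cases hc1 : (a : ℕ) < n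
      · set j : Fin n := ⟨a, hc1⟩ with hjdef
        have haj : a = h j := by
          simp only [hh]
          apply Fin.ext
          simp [hjdef]
        split_ifs with hlt
        · have hjP : j ∈ P := by
            by_contra hjP
            have := hout j hjP
            rw [← haj] at this
            omega
          have e1 : runSched F' W' (ext x) a = F x j := by
            have := congrFun (hsim (ext x)) j
            rw [hphi x] at this
            rw [haj]; exact this
          have e2 : runSched F' W' (ext x') a = F x' j := by
            have := congrFun (hsim (ext x')) j
            rw [hphi x'] at this
            rw [haj]; exact this
          rw [e1, e2]
          exact hP j hjP
        · have hjP : j ∉ P := by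
            intro hjp
            have := hin j hjp
            rw [← haj] at this
            exact hlt this
          simp only [hext0]
          simp only [dif_pos hc1]
          exact hQ j hjP
      · split_ifs with hlt
        · set ℓ : Fin k := ⟨(a : ℕ) - n, by omega⟩ with hldef
          have haℓ : a = Fin.natAdd n ℓ := by
            apply Fin.ext
            simp [hldef, Fin.natAdd]
            omega
          rw [haℓ]
          exact congrFun hcc ℓ
        · simp only [hext0]
          simp [dif_neg hc1]
    have hfull : runSched F' W' (ext x) = runSched F' W' (ext x') := by
      rw [runSched_split F' W' t, runSched_split F' W' t, hst]
    funext j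
    have e1 := congrFun (hsim (ext x)) j
    rw [hphi x] at e1
    have e2 := congrFun (hsim (ext x')) j
    rw [hphi x'] at e2
    rw [← e1, ← e2, hfull]
  let C : (gnecc F W).Coloring (Fin k → Bool) :=
    SimpleGraph.Coloring.mk c (fun {x x'} hadj => hcol x x' hadj)
  have h1 : (gnecc F W).chromaticNumber ≤ ((2 ^ k : ℕ) : ℕ∞) := by
    have := C.colorable.chromaticNumber_le
    have hcard : Fintype.card (Fin k → Bool) = 2 ^ k := by simp
    rwa [hcard] at this
  have h2 : ((gnecc F W).chromaticNumber).toNat ≤ 2 ^ k := by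
    have := ENat.toNat_le_toNat h1 (ENat.coe_ne_top _)
    simpa only [ENat.toNat_coe] using this
  calc Nat.clog 2 ((gnecc F W).chromaticNumber.toNat)
      ≤ Nat.clog 2 (2 ^ k) := Nat.clog_mono_right 2 h2
    _ = k := Nat.clog_pow 2 k one_lt_two
end

section
/- For any BAN F: B^n → B^n and any block-sequential update schedule W on V = {0,...,n-1}, there exists a BAN F' on n+k automata with k = ⌈log₂(χ(G_NECC(F,W)))⌉ and an update schedule W' extending W (preserving its order on V) such that (F',W') id-simulates (F,[V]). Hence κ(F,W) ≤ ⌈log₂(χ(G_NECC(F,W)))⌉. -/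
namespace BANAux

open Finset

/-- The block of the `k` extra automata. -/
def extraBlock (n k : ℕ) : Finset (Fin (n + k)) := Finset.univ.image (Fin.natAdd n)

/-- The extended schedule: extra automata first (if any), then the blocks of `W`. -/
def extSched {n : ℕ} (W : List (Finset (Fin n))) (k : ℕ) : List (Finset (Fin (n + k))) :=
  (if k = 0 then [] else [extraBlock n k]) ++ W.map (Finset.image (Fin.castAdd k))

open Classical in
/-- The simulating network. -/
noncomputable def simF {n k : ℕ} (F : Conf n → Conf n) (W : List (Finset (Fin n)))
    (col : Conf n → Conf k) : Conf (n + k) → Conf (n + k) := fun z =>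
  Fin.addCases (motive := fun _ => Bool)
    (fun i =>
      if hx : ∃ x0 : Conf n, col x0 = (fun e => z (Fin.natAdd n e)) ∧
          updSet F (prefUnion W (stepOf W i)) x0 = (fun i' => z (Fin.castAdd k i'))
      then F hx.choose i else z (Fin.castAdd k i))
    (fun e => col (fun i => z (Fin.castAdd k i)) e)

theorem castAdd_inj {n k : ℕ} : Function.Injective (Fin.castAdd k : Fin n → Fin (n + k)) :=
  fun a b h => Fin.ext (by simpa using congrArg Fin.val h)

theorem castAdd_ne_natAdd {n k : ℕ} (i : Fin n) (e : Fin k) :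
    Fin.castAdd k i ≠ Fin.natAdd n e := by
  intro h; have := congrArg Fin.val h; simp at this; omega

theorem mem_image_castAdd {n k : ℕ} (i : Fin n) (B : Finset (Fin n)) :
    Fin.castAdd k i ∈ B.image (Fin.castAdd k) ↔ i ∈ B := by
  simp only [Finset.mem_image]
  constructor
  · rintro ⟨j, hj, hji⟩; rwa [castAdd_inj hji] at hj
  · exact fun h => ⟨i, h, rfl⟩

theorem castAdd_not_mem_extraBlock {n k : ℕ} (i : Fin n) :
    Fin.castAdd k i ∉ extraBlock n k := by
  simp only [extraBlock, Finset.mem_image]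
  rintro ⟨e, -, he⟩
  exact castAdd_ne_natAdd i e he.symm

theorem natAdd_mem_extraBlock {n k : ℕ} (e : Fin k) : Fin.natAdd n e ∈ extraBlock n k := by
  simp [extraBlock]

theorem natAdd_not_mem_image {n k : ℕ} (e : Fin k) (B : Finset (Fin n)) :
    Fin.natAdd n e ∉ B.image (Fin.castAdd k) := by
  simp only [Finset.mem_image]
  rintro ⟨i, -, hi⟩
  exact castAdd_ne_natAdd i e hi

theorem stepOf_map {n k : ℕ} (W : List (Finset (Fin n))) (i : Fin n) :
    stepOf (W.map (Finset.image (Fin.castAdd k))) (Fin.castAdd k i) = stepOf W i := by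
  induction W with
  | nil => rfl
  | cons B T ih =>
    simp only [stepOf, List.map_cons, List.findIdx_cons] at *
    by_cases h : i ∈ B
    · simp [h, (mem_image_castAdd i B).mpr h]
    · have h2 : Fin.castAdd k i ∉ B.image (Fin.castAdd k) := by
        rw [mem_image_castAdd]; exact h
      rw [decide_eq_false h, decide_eq_false h2]
      simp [ih]

theorem stepOf_ext {n k : ℕ} (W : List (Finset (Fin n))) (i : Fin n) :
    stepOf (extSched W k) (Fin.castAdd k i) = (if k = 0 then 0 else 1) + stepOf W i := by
  unfold extSched
  by_cases hk : k = 0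
  · simp [hk, stepOf_map]
  · have key : stepOf (extSched W k) (Fin.castAdd k i) =
        stepOf (W.map (Finset.image (Fin.castAdd k))) (Fin.castAdd k i) + 1 := by
      simp only [extSched, hk, if_false, List.cons_append, List.nil_append]
      unfold stepOf
      rw [List.findIdx_cons, decide_eq_false (castAdd_not_mem_extraBlock i)]
      simp only [cond_false]
    unfold extSched at key
    rw [key, stepOf_map]
    simp [hk, Nat.add_comm]

theorem stepOf_eq {n : ℕ} {W : List (Finset (Fin n))} (hd : W.Pairwise Disjoint)
    {j : ℕ} (hj : j < W.length) {i : Fin n} (hi : i ∈ W[j]) : stepOf W i = j := by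
  induction W generalizing j with
  | nil => simp at hj
  | cons B T ih =>
    rcases List.pairwise_cons.mp hd with ⟨hB, hT⟩
    cases j with
    | zero =>
      simp only [List.getElem_cons_zero] at hi
      simp [stepOf, List.findIdx_cons, hi]
    | succ j =>
      simp only [List.getElem_cons_succ] at hi
      have hiB : i ∉ B := by
        intro hmem
        have := hB _ (List.getElem_mem (by simpa using Nat.lt_of_succ_lt_succ hj))
        exact (Finset.disjoint_left.mp this hmem) hi
      unfold stepOf
      rw [List.findIdx_cons, decide_eq_false hiB]
      simp only [cond_false]
      rw [← stepOf, ih hT (Nat.lt_of_succ_lt_succ hj) hi]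

theorem foldr_union_init {α : Type*} [DecidableEq α] (l : List (Finset α)) (s : Finset α) :
    l.foldr (· ∪ ·) s = l.foldr (· ∪ ·) ∅ ∪ s := by
  induction l with
  | nil => simp
  | cons B T ih =>
    simp only [List.foldr_cons]
    rw [ih, Finset.union_assoc]

theorem prefUnion_zero {n : ℕ} (W : List (Finset (Fin n))) : prefUnion W 0 = ∅ := rfl

theorem prefUnion_succ {n : ℕ} (W : List (Finset (Fin n))) {j : ℕ} (hj : j < W.length) :
    prefUnion W (j + 1) = prefUnion W j ∪ W[j] := by
  unfold prefUnion
  rw [List.take_succ, List.foldr_append, List.getElem?_eq_getElem hj]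
  simp only [Option.toList_some, List.foldr_cons, List.foldr_nil]
  rw [foldr_union_init]
  simp

theorem updSet_empty {n : ℕ} (F : Conf n → Conf n) (x : Conf n) : updSet F ∅ x = x := by
  funext i; simp [updSet]

theorem updSet_univ {n : ℕ} (F : Conf n → Conf n) (x : Conf n) :
    updSet F Finset.univ x = F x := by
  funext i; simp [updSet]

theorem image_foldr {n k : ℕ} (W : List (Finset (Fin n))) :
    (W.map (Finset.image (Fin.castAdd k))).foldr (· ∪ ·) ∅ =
      (W.foldr (· ∪ ·) ∅).image (Fin.castAdd k) := by
  induction W with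
  | nil => simp
  | cons B T ih => simp [ih, Finset.image_union]

theorem union_eq_univ {n k : ℕ} :
    extraBlock n k ∪ Finset.univ.image (Fin.castAdd k) = (Finset.univ : Finset (Fin (n + k))) := by
  apply Finset.eq_univ_of_forall
  intro v
  induction v using Fin.addCases with
  | left i => exact Finset.mem_union_right _ (Finset.mem_image_of_mem _ (Finset.mem_univ i))
  | right e => exact Finset.mem_union_left _ (natAdd_mem_extraBlock e)

theorem extSched_isSchedule {n k : ℕ} {W : List (Finset (Fin n))} (hW : isSchedule W) :
    isSchedule (extSched W k) := by
  obtain ⟨hne, hdisj, huniv⟩ := hW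
  refine ⟨?_, ?_, ?_⟩
  · intro B hB
    unfold extSched at hB
    rcases List.mem_append.mp hB with h | h
    · by_cases hk : k = 0
      · simp [hk] at h
      · simp only [hk, if_false, List.mem_singleton] at h
        subst h
        exact ⟨Fin.natAdd n ⟨0, Nat.pos_of_ne_zero hk⟩, natAdd_mem_extraBlock _⟩
    · rcases List.mem_map.mp h with ⟨B', hB', rfl⟩
      exact (hne B' hB').image _
  · unfold extSched
    rw [List.pairwise_append]
    refine ⟨?_, ?_, ?_⟩
    · by_cases hk : k = 0 <;> simp [hk]
    · exact hdisj.map _ (fun A B hAB => (Finset.disjoint_image castAdd_inj).mpr hAB)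
    · intro A hA B hB
      by_cases hk : k = 0
      · simp [hk] at hA
      · simp only [hk, if_false, List.mem_singleton] at hA
        subst hA
        rcases List.mem_map.mp hB with ⟨B', hB', rfl⟩
        rw [Finset.disjoint_left]
        intro v hv
        simp only [extraBlock, Finset.mem_image] at hv
        rcases hv with ⟨e, -, rfl⟩
        exact natAdd_not_mem_image e B'
  · unfold extSched
    rw [List.foldr_append, image_foldr, huniv]
    by_cases hk : k = 0
    · subst hk
      simp only [if_true, List.foldr_nil]
      apply Finset.eq_univ_of_forall
      intro v
      have hv : v = Fin.castAdd 0 ⟨v.val, Nat.lt_of_lt_of_eq v.isLt (Nat.add_zero n)⟩ :=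
        Fin.ext rfl
      rw [hv]
      exact Finset.mem_image_of_mem _ (Finset.mem_univ _)
    · simp only [hk, if_false, List.foldr_cons, List.foldr_nil]
      exact union_eq_univ

theorem extSched_extends {n k : ℕ} (W : List (Finset (Fin n))) :
    extendsSched W (extSched W k) (Fin.castAdd k) := by
  intro i i'
  rw [stepOf_ext, stepOf_ext]
  omega

/-- The target configuration after `j` macro-steps. -/
def tgt {n k : ℕ} (F : Conf n → Conf n) (W : List (Finset (Fin n))) (col : Conf n → Conf k)
    (x : Conf n) (j : ℕ) : Conf (n + k) := fun v =>
  Fin.addCases (motive := fun _ => Bool)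
    (fun i => updSet F (prefUnion W j) x i) (fun e => col x e) v

variable {n k : ℕ} {F : Conf n → Conf n} {W : List (Finset (Fin n))} {col : Conf n → Conf k}

/-- The key separation property of the colouring. -/
def Separating (F : Conf n → Conf n) (W : List (Finset (Fin n))) (col : Conf n → Conf k) : Prop :=
  ∀ x x' : Conf n, col x = col x' → confusable F W x x' → F x = F x'

theorem step_lemma (hd : W.Pairwise Disjoint) (hsep : Separating F W col)
    (x : Conf n) {j : ℕ} (hj : j < W.length) :
    updSet (simF F W col) ((W[j]).image (Fin.castAdd k)) (tgt F W col x j) =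
      tgt F W col x (j + 1) := by
  funext v
  induction v using Fin.addCases with
  | left i =>
    by_cases hi : i ∈ W[j]
    · have hmem : Fin.castAdd k i ∈ (W[j]).image (Fin.castAdd k) :=
        (mem_image_castAdd i _).mpr hi
      show (if Fin.castAdd k i ∈ (W[j]).image (Fin.castAdd k) then
          simF F W col (tgt F W col x j) (Fin.castAdd k i)
        else tgt F W col x j (Fin.castAdd k i)) = tgt F W col x (j + 1) (Fin.castAdd k i)
      rw [if_pos hmem]
      have hstep : stepOf W i = j := stepOf_eq hd hj hi
      have hxw : ∃ x0 : Conf n, col x0 = (fun e => tgt F W col x j (Fin.natAdd n e)) ∧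
          updSet F (prefUnion W (stepOf W i)) x0 =
            (fun i' => tgt F W col x j (Fin.castAdd k i')) := by
        refine ⟨x, ?_, ?_⟩
        · funext e; simp [tgt]
        · funext i'; rw [hstep]; simp [tgt]
      simp only [simF, Fin.addCases_left]
      rw [dif_pos hxw]
      obtain ⟨hc, hu⟩ := hxw.choose_spec
      have hcol : col hxw.choose = col x := by
        rw [hc]; funext e; simp [tgt]
      have hux : updSet F (prefUnion W (stepOf W i)) x =
          fun i' => tgt F W col x j (Fin.castAdd k i') := by
        rw [hstep]; funext i'; simp [tgt]
      have hupd : updSet F (prefUnion W (stepOf W i)) hxw.choose =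
          updSet F (prefUnion W (stepOf W i)) x := hu.trans hux.symm
      have hFF : F hxw.choose = F x :=
        hsep _ _ hcol ⟨stepOf W i, by rw [hstep]; exact Nat.le_of_lt hj, hupd⟩
      have hmem' : i ∈ prefUnion W (j + 1) := by
        rw [prefUnion_succ W hj]; exact Finset.mem_union_right _ hi
      rw [congrFun hFF i]
      simp [tgt, updSet, hmem']
    · have hmem : Fin.castAdd k i ∉ (W[j]).image (Fin.castAdd k) := by
        rw [mem_image_castAdd]; exact hi
      simp only [updSet, hmem, if_neg, if_false]
      simp only [tgt, Fin.addCases_left, updSet, prefUnion_succ W hj, Finset.mem_union, hi,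
        or_false]
  | right e =>
    have hmem : Fin.natAdd n e ∉ (W[j]).image (Fin.castAdd k) := natAdd_not_mem_image e _
    simp only [updSet, hmem, if_neg, if_false]
    simp [tgt]

theorem init_lemma (z : Conf (n + k)) :
    List.foldl (fun y B => updSet (simF F W col) B y) z (if k = 0 then [] else [extraBlock n k]) =
      tgt F W col (fun i => z (Fin.castAdd k i)) 0 := by
  by_cases hk : k = 0
  · subst hk
    simp only [if_true, List.foldl_nil]
    funext v
    induction v using Fin.addCases with
    | left i =>
      show z (Fin.castAdd 0 i) =
        tgt F W col (fun i' => z (Fin.castAdd 0 i')) 0 (Fin.castAdd 0 i)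
      simp only [tgt]
      rw [Fin.addCases_left, prefUnion_zero, updSet_empty]
    | right e => exact Fin.elim0 e
  · simp only [hk, if_false, List.foldl_cons, List.foldl_nil]
    funext v
    induction v using Fin.addCases with
    | left i =>
      have hmem : Fin.castAdd k i ∉ extraBlock n k := castAdd_not_mem_extraBlock i
      simp [updSet, hmem, tgt, prefUnion_zero, updSet_empty]
    | right e =>
      have hmem : Fin.natAdd n e ∈ extraBlock n k := natAdd_mem_extraBlock e
      simp [updSet, hmem, tgt, simF]

theorem chain_lemma (hd : W.Pairwise Disjoint) (hsep : Separating F W col) (x : Conf n)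
    {j : ℕ} (hj : j ≤ W.length) :
    List.foldl (fun y B => updSet (simF F W col) B y) (tgt F W col x 0)
      ((W.map (Finset.image (Fin.castAdd k))).take j) = tgt F W col x j := by
  induction j with
  | zero => simp
  | succ j ih =>
    have hj' : j < W.length := hj
    rw [List.take_succ, List.getElem?_eq_getElem (by simpa using hj'), List.foldl_append,
      ih (Nat.le_of_lt hj')]
    simp only [List.getElem_map, Option.toList_some, List.foldl_cons, List.foldl_nil]
    exact step_lemma hd hsep x hj'

theorem simF_simulates (hW : isSchedule W) (hsep : Separating F W col) :
    simulates (simF F W col) (extSched W k) F (Fin.castAdd k) := by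
  intro z
  set x : Conf n := fun i => z (Fin.castAdd k i) with hx
  have h1 : runSched (simF F W col) (extSched W k) z = tgt F W col x W.length := by
    unfold runSched extSched
    rw [List.foldl_append, init_lemma]
    have := chain_lemma (col := col) hW.2.1 hsep x (le_refl W.length)
    rwa [List.take_of_length_le (by simp)] at this
  funext i
  rw [h1]
  have hlen : prefUnion W W.length = Finset.univ := by
    unfold prefUnion
    rw [List.take_of_length_le (le_refl _)]
    exact hW.2.2
  simp [tgt, hlen, updSet_univ]

end BANAux

theorem stmt1 {n : ℕ} (F : Conf n → Conf n) (W : List (Finset (Fin n)))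
    (hW : isSchedule W) (k : ℕ)
    (hk : k = Nat.clog 2 ((gnecc F W).chromaticNumber.toNat)) :
    (∃ W' : List (Finset (Fin (n + k))), isSchedule W' ∧
        extendsSched W W' (Fin.castAdd k) ∧
        ∃ F' : Conf (n + k) → Conf (n + k), simulates F' W' F (Fin.castAdd k)) ∧
    kappa F W ≤ k := by
  classical
  obtain ⟨C⟩ := (gnecc F W).colorable_chromaticNumber_of_fintype
  have hcard : Fintype.card (Fin ((gnecc F W).chromaticNumber.toNat)) ≤
      Fintype.card (Conf k) := by
    rw [Fintype.card_fin]
    have h2 : Fintype.card (Conf k) = 2 ^ k := by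
      simp [Conf]
    rw [h2, hk]
    exact Nat.le_pow_clog (by norm_num) _
  obtain ⟨emb⟩ := Function.Embedding.nonempty_of_card_le hcard
  set col : Conf n → Conf k := fun x => emb (C x) with hcoldef
  have hsep : BANAux.Separating F W col := by
    intro x x' hc hconf
    by_contra hne
    exact C.valid ⟨hne, hconf⟩ (emb.injective hc)
  have h1 : isSchedule (BANAux.extSched W k) := BANAux.extSched_isSchedule hW
  have h2 : extendsSched W (BANAux.extSched W k) (Fin.castAdd k) := BANAux.extSched_extends W
  have h3 : simulates (BANAux.simF F W col) (BANAux.extSched W k) F (Fin.castAdd k) :=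
    BANAux.simF_simulates hW hsep
  refine ⟨⟨_, h1, h2, _, h3⟩, ?_⟩
  exact Nat.sInf_le ⟨Fin.castAdd k, BANAux.castAdd_inj, _, h1, h2, _, h3⟩
end

section
/- If X ⊆ B^n is a clique of the NECC graph of (F,W), then there exists a single step i ∈ [0,p] such that for all x, x' ∈ X, F_{W_{<i}}(x) = F_{W_{<i}}(x') (i.e., i ∈ CC(x,x') for all pairs in X). -/
namespace Stmt12Aux

variable {n : ℕ}

lemma mem_foldr_union {l : List (Finset (Fin n))} {k : Fin n} :
    k ∈ l.foldr (· ∪ ·) ∅ ↔ ∃ B ∈ l, k ∈ B := by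
  induction l with
  | nil => simp
  | cons B t ih => simp [ih]

lemma pref_mono (W : List (Finset (Fin n))) {i j : ℕ} (h : i ≤ j) :
    prefUnion W i ⊆ prefUnion W j := by
  intro k hk
  rw [prefUnion, mem_foldr_union] at hk ⊢
  obtain ⟨B, hB, hkB⟩ := hk
  exact ⟨B, (List.take_isPrefix_take.2 (Or.inl h)).subset hB, hkB⟩

lemma pref_length (W : List (Finset (Fin n))) (hW : isSchedule W) :
    prefUnion W W.length = Finset.univ := by
  rw [prefUnion, List.take_length]; exact hW.2.2

lemma pref_zero (W : List (Finset (Fin n))) : prefUnion W 0 = ∅ := rfl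

lemma updSet_eq_iff (F : Conf n → Conf n) (S : Finset (Fin n)) (x y : Conf n) :
    updSet F S x = updSet F S y ↔
      (∀ k ∈ S, F x k = F y k) ∧ (∀ k ∉ S, x k = y k) := by
  constructor
  · intro h
    constructor
    · intro k hk
      have := congrFun h k; simpa [updSet, hk] using this
    · intro k hk
      have := congrFun h k; simpa [updSet, hk] using this
  · rintro ⟨h1, h2⟩
    funext k
    by_cases hk : k ∈ S <;> simp [updSet, hk, h1, h2, h1 k, h2 k]

/-- `x` and `y` agree outside the first `i` blocks. -/
def P (W : List (Finset (Fin n))) (i : ℕ) (x y : Conf n) : Prop :=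
  ∀ k, k ∉ prefUnion W i → x k = y k

/-- `F x` and `F y` agree on the first `i` blocks. -/
def Q (F : Conf n → Conf n) (W : List (Finset (Fin n))) (i : ℕ) (x y : Conf n) : Prop :=
  ∀ k, k ∈ prefUnion W i → F x k = F y k

lemma P_mono {W : List (Finset (Fin n))} {i j : ℕ} (h : i ≤ j) {x y : Conf n}
    (hp : P W i x y) : P W j x y :=
  fun k hk => hp k (fun hm => hk (pref_mono W h hm))

lemma Q_anti {F : Conf n → Conf n} {W : List (Finset (Fin n))} {i j : ℕ} (h : i ≤ j)
    {x y : Conf n} (hq : Q F W j x y) : Q F W i x y :=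
  fun k hk => hq k (pref_mono W h hk)

lemma P_symm {W : List (Finset (Fin n))} {i : ℕ} {x y : Conf n} (h : P W i x y) : P W i y x :=
  fun k hk => (h k hk).symm

lemma Q_symm {F : Conf n → Conf n} {W : List (Finset (Fin n))} {i : ℕ} {x y : Conf n}
    (h : Q F W i x y) : Q F W i y x := fun k hk => (h k hk).symm

lemma P_trans {W : List (Finset (Fin n))} {i : ℕ} {x y z : Conf n}
    (h1 : P W i x y) (h2 : P W i y z) : P W i x z :=
  fun k hk => (h1 k hk).trans (h2 k hk)

lemma Q_trans {F : Conf n → Conf n} {W : List (Finset (Fin n))} {i : ℕ} {x y z : Conf n}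
    (h1 : Q F W i x y) (h2 : Q F W i y z) : Q F W i x z :=
  fun k hk => (h1 k hk).trans (h2 k hk)

lemma P_top {W : List (Finset (Fin n))} (hW : isSchedule W) (x y : Conf n) :
    P W W.length x y := by
  intro k hk
  rw [pref_length W hW] at hk
  exact absurd (Finset.mem_univ k) hk

/-- Lower endpoint of `CC(x,y)`. -/
noncomputable def aIdx (W : List (Finset (Fin n))) (x y : Conf n) : ℕ :=
  sInf {i | P W i x y}

/-- Upper endpoint of `CC(x,y)`. -/
noncomputable def bIdx (F : Conf n → Conf n) (W : List (Finset (Fin n))) (x y : Conf n) : ℕ :=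
  sSup {i | i ≤ W.length ∧ Q F W i x y}

variable {F : Conf n → Conf n} {W : List (Finset (Fin n))} (hW : isSchedule W)

lemma aIdx_spec (hW : isSchedule W) (x y : Conf n) : P W (aIdx W x y) x y :=
  Nat.sInf_mem (s := {i | P W i x y}) ⟨W.length, P_top hW x y⟩

lemma aIdx_le {i : ℕ} {x y : Conf n} (h : P W i x y) : aIdx W x y ≤ i := Nat.sInf_le h

lemma aIdx_le_length (hW : isSchedule W) (x y : Conf n) : aIdx W x y ≤ W.length := aIdx_le (P_top hW x y)

lemma bIdx_bdd : BddAbove {i | i ≤ W.length ∧ Q F W i x y} :=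
  ⟨W.length, fun _ h => h.1⟩

lemma bIdx_spec (x y : Conf n) :
    bIdx F W x y ≤ W.length ∧ Q F W (bIdx F W x y) x y :=
  Nat.sSup_mem (s := {i | i ≤ W.length ∧ Q F W i x y})
    ⟨0, Nat.zero_le _, fun k hk => by simp [pref_zero] at hk⟩ bIdx_bdd

lemma le_bIdx {i : ℕ} {x y : Conf n} (h1 : i ≤ W.length) (h2 : Q F W i x y) :
    i ≤ bIdx F W x y := le_csSup bIdx_bdd ⟨h1, h2⟩

lemma aIdx_symm (x y : Conf n) : aIdx W x y = aIdx W y x := by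
  unfold aIdx
  congr 1
  ext i
  exact ⟨P_symm, P_symm⟩

lemma bIdx_symm (x y : Conf n) : bIdx F W x y = bIdx F W y x := by
  unfold bIdx
  congr 1
  ext i
  exact ⟨fun h => ⟨h.1, Q_symm h.2⟩, fun h => ⟨h.1, Q_symm h.2⟩⟩

lemma aIdx_triangle (hW : isSchedule W) (x y z : Conf n) :
    aIdx W x z ≤ max (aIdx W x y) (aIdx W y z) := by
  apply aIdx_le
  exact P_trans (P_mono (le_max_left _ _) (aIdx_spec hW x y))
    (P_mono (le_max_right _ _) (aIdx_spec hW y z))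

lemma bIdx_triangle (x y z : Conf n) :
    min (bIdx F W x y) (bIdx F W y z) ≤ bIdx F W x z := by
  apply le_bIdx (le_trans (min_le_left _ _) (bIdx_spec x y).1)
  exact Q_trans (Q_anti (min_le_left _ _) (bIdx_spec x y).2)
    (Q_anti (min_le_right _ _) (bIdx_spec y z).2)

section Main

variable {n : ℕ} {F : Conf n → Conf n} {W : List (Finset (Fin n))}

lemma a_le_b (hW : isSchedule W) {x y : Conf n}
    (h : F x = F y ∨ x = y ∨ confusable F W x y) :
    aIdx W x y ≤ bIdx F W x y := by
  rcases h with h | h | ⟨i, hi, heq⟩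
  · refine le_trans (aIdx_le_length hW x y) (le_bIdx le_rfl ?_)
    exact fun k _ => congrFun h k
  · subst h
    exact le_trans (aIdx_le (fun k _ => rfl)) (Nat.zero_le _)
  · rw [updSet_eq_iff] at heq
    exact le_trans (aIdx_le heq.2) (le_bIdx hi heq.1)

lemma cross (hW : isSchedule W)
    {x y u v : Conf n}
    (hxy : aIdx W x y ≤ bIdx F W x y) (hxu : aIdx W x u ≤ bIdx F W x u)
    (hxv : aIdx W x v ≤ bIdx F W x v) (huy : aIdx W u y ≤ bIdx F W u y)
    (huv : aIdx W u v ≤ bIdx F W u v) (hyv : aIdx W y v ≤ bIdx F W y v) :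
    aIdx W x y ≤ bIdx F W u v := by
  by_contra hc
  push_neg at hc
  have t1 := aIdx_triangle hW x u y
  have t2 := aIdx_triangle hW x v u
  have t3 := aIdx_triangle hW u v y
  have t4 := bIdx_triangle (F := F) (W := W) u x v
  have t5 := bIdx_triangle (F := F) (W := W) u y v
  have s1 := bIdx_symm (F := F) (W := W) u x
  have s2 := bIdx_symm (F := F) (W := W) u y
  have s3 := aIdx_symm (W := W) v u
  have s4 := aIdx_symm (W := W) v y
  have s5 := bIdx_symm (F := F) (W := W) y v
  have s6 := bIdx_symm (F := F) (W := W) x v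
  omega

end Main

end Stmt12Aux

open Stmt12Aux in
theorem stmt12 {n : ℕ} (F : Conf n → Conf n) (W : List (Finset (Fin n)))
    (hW : isSchedule W) (X : Set (Conf n)) (hX : (gnecc F W).IsClique X) :
    ∃ i ≤ W.length, ∀ x ∈ X, ∀ x' ∈ X,
      updSet F (prefUnion W i) x = updSet F (prefUnion W i) x' := by
  have hab : ∀ x ∈ X, ∀ y ∈ X, aIdx W x y ≤ bIdx F W x y := by
    intro x hx y hy
    by_cases hxy : x = y
    · exact a_le_b hW (Or.inr (Or.inl hxy))
    · exact a_le_b hW (Or.inr (Or.inr (hX hx hy hxy).2))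
  rcases X.eq_empty_or_nonempty with hXe | ⟨x0, hx0⟩
  · exact ⟨0, Nat.zero_le _, by simp [hXe]⟩
  set S : Set ℕ := {i | ∃ x ∈ X, ∃ y ∈ X, aIdx W x y = i} with hS
  have hSne : S.Nonempty := ⟨aIdx W x0 x0, x0, hx0, x0, hx0, rfl⟩
  have hSbdd : BddAbove S := by
    refine ⟨W.length, ?_⟩
    rintro i ⟨x, hx, y, hy, rfl⟩
    exact aIdx_le_length hW x y
  obtain ⟨u, hu, v, hv, huv⟩ := Nat.sSup_mem hSne hSbdd
  refine ⟨sSup S, by rw [← huv]; exact aIdx_le_length hW u v, ?_⟩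
  intro x hx y hy
  rw [updSet_eq_iff]
  constructor
  · refine Q_anti ?_ (bIdx_spec x y).2
    rw [← huv]
    exact cross hW (hab u hu v hv) (hab u hu x hx) (hab u hu y hy)
      (hab x hx v hv) (hab x hx y hy) (hab v hv y hy)
  · exact fun k hk => P_mono (le_csSup hSbdd ⟨x, hx, y, hy, rfl⟩) (aIdx_spec hW x y) k hk
end

section
/- For any BAN F: B^n → B^n and block-sequential update schedule W, the clique number of the NECC graph satisfies ω(G_NECC(F,W)) ≤ 2^{⌊n/2⌋}. -/
section Aux

variable {n : ℕ} {F : Conf n → Conf n} {W : List (Finset (Fin n))}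

lemma foldr_take_subset (l : List (Finset (Fin n))) (i : ℕ) :
    (l.take i).foldr (· ∪ ·) ∅ ⊆ l.foldr (· ∪ ·) ∅ := by
  induction l generalizing i with
  | nil => simp
  | cons B l ih =>
    cases i with
    | zero => simp
    | succ i =>
      simp only [List.take_succ_cons, List.foldr_cons]
      exact Finset.union_subset_union_right (ih i)

lemma prefUnion_mono {i j : ℕ} (h : i ≤ j) : prefUnion W i ⊆ prefUnion W j := by
  have : W.take i = (W.take j).take i := by
    rw [List.take_take, Nat.min_eq_left h]
  unfold prefUnion
  rw [this]
  exact foldr_take_subset (W.take j) i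

lemma updSet_eq_iff {P : Finset (Fin n)} {x y : Conf n} :
    updSet F P x = updSet F P y ↔
      (∀ a ∈ P, F x a = F y a) ∧ (∀ a ∉ P, x a = y a) := by
  constructor
  · intro h
    constructor
    · intro a ha
      have := congrFun h a
      simpa [updSet, ha] using this
    · intro a ha
      have := congrFun h a
      simpa [updSet, ha] using this
  · rintro ⟨h1, h2⟩
    funext a
    by_cases ha : a ∈ P
    · simpa [updSet, ha] using h1 a ha
    · simpa [updSet, ha] using h2 a ha

lemma midStep {a b c : ℕ} {x y z : Conf n} (hab : a ≤ b) (hbc : b ≤ c)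
    (hb : updSet F (prefUnion W b) x = updSet F (prefUnion W b) y)
    (ha : updSet F (prefUnion W a) x = updSet F (prefUnion W a) z)
    (hc : updSet F (prefUnion W c) y = updSet F (prefUnion W c) z) :
    updSet F (prefUnion W b) x = updSet F (prefUnion W b) z := by
  rw [updSet_eq_iff] at hb ha hc ⊢
  refine ⟨fun i hi => (hb.1 i hi).trans (hc.1 i (prefUnion_mono hbc hi)),
    fun i hi => ha.2 i (fun hmem => hi (prefUnion_mono hab hmem))⟩

lemma mem_CCset {i : ℕ} {x y : Conf n} :
    i ∈ CCset F W x y ↔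
      i ≤ W.length ∧ updSet F (prefUnion W i) x = updSet F (prefUnion W i) y :=
  Iff.rfl

lemma CCset_comm {x y : Conf n} : CCset F W x y = CCset F W y x := by
  ext i
  exact ⟨fun h => ⟨h.1, h.2.symm⟩, fun h => ⟨h.1, h.2.symm⟩⟩

lemma bddCC {x y : Conf n} : BddAbove (CCset F W x y) :=
  ⟨W.length, fun _ hi => hi.1⟩

lemma mem_CC_interval {x y : Conf n} (hne : (CCset F W x y).Nonempty) {i : ℕ}
    (h1 : sInf (CCset F W x y) ≤ i) (h2 : i ≤ sSup (CCset F W x y)) :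
    i ∈ CCset F W x y := by
  have hm := Nat.sInf_mem hne
  have hM := Nat.sSup_mem hne bddCC
  exact ⟨h2.trans hM.1, midStep h1 h2 rfl hm.2 hM.2⟩

lemma triangle {x y z : Conf n} {p q r : ℕ}
    (hxy : p ∈ CCset F W x y) (hyz : q ∈ CCset F W y z) (hxz : r ∈ CCset F W x z) :
    ∃ c, c ∈ CCset F W x y ∧ c ∈ CCset F W y z ∧ c ∈ CCset F W x z := by
  rcases le_total p q with hpq | hqp
  · rcases le_total q r with hqr | hrq
    · -- p ≤ q ≤ r
      have h1 := midStep hpq hqr hyz.2 hxy.2.symm hxz.2.symm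
      exact ⟨q, ⟨hyz.1, h1.symm⟩, hyz, ⟨hyz.1, h1.symm.trans hyz.2⟩⟩
    · rcases le_total p r with hpr | hrp
      · -- p ≤ r ≤ q
        have h1 := midStep hpr hrq hxz.2 hxy.2 hyz.2.symm
        exact ⟨r, ⟨hxz.1, h1⟩, ⟨hxz.1, h1.symm.trans hxz.2⟩, hxz⟩
      · -- r ≤ p ≤ q
        have h1 := midStep hrp hpq hxy.2 hxz.2 hyz.2
        exact ⟨p, hxy, ⟨hxy.1, hxy.2.symm.trans h1⟩, ⟨hxy.1, h1⟩⟩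
  · rcases le_total q r with hqr | hrq
    · rcases le_total p r with hpr | hrp
      · -- q ≤ p ≤ r
        have h1 := midStep hqp hpr hxy.2.symm hyz.2 hxz.2
        exact ⟨p, hxy, ⟨hxy.1, h1⟩, ⟨hxy.1, hxy.2.trans h1⟩⟩
      · -- q ≤ r ≤ p
        have h1 := midStep hqr hrp hxz.2.symm hyz.2.symm hxy.2
        exact ⟨r, ⟨hxz.1, hxz.2.trans h1⟩, ⟨hxz.1, h1.symm⟩, hxz⟩
    · -- r ≤ q ≤ p
      have h1 := midStep hrq hqp hyz.2.symm hxz.2.symm hxy.2.symm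
      exact ⟨q, ⟨hyz.1, h1.symm.trans hyz.2.symm⟩, hyz, ⟨hyz.1, h1.symm⟩⟩

lemma helly {x y u v : Conf n} (hxy : x ≠ y) (huv : u ≠ v)
    (hcc : ∀ a b : Conf n, a ∈ [x, y, u, v] → b ∈ [x, y, u, v] → a ≠ b →
      (CCset F W a b).Nonempty) :
    sInf (CCset F W x y) ≤ sSup (CCset F W u v) := by
  have mx : x ∈ [x, y, u, v] := by simp
  have my : y ∈ [x, y, u, v] := by simp
  have mu : u ∈ [x, y, u, v] := by simp
  have mv : v ∈ [x, y, u, v] := by simp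
  have nxy := hcc x y mx my hxy
  have nuv := hcc u v mu mv huv
  by_cases hxu : x = u
  · subst hxu
    by_cases hyv : y = v
    · subst hyv
      exact le_csSup bddCC (Nat.sInf_mem nxy)
    · -- x = u, y ≠ v : triangle x y v
      obtain ⟨p1, hp1⟩ := nxy
      obtain ⟨p2, hp2⟩ := hcc y v my mv hyv
      obtain ⟨p3, hp3⟩ := hcc x v mx mv huv
      obtain ⟨c, hc1, _, hc3⟩ := triangle hp1 hp2 hp3
      exact le_trans (Nat.sInf_le hc1) (le_csSup bddCC hc3)
  · by_cases hxv : x = v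
    · subst hxv
      by_cases hyu : y = u
      · subst hyu
        rw [CCset_comm (x := y) (y := x)]
        exact le_csSup bddCC (Nat.sInf_mem nxy)
      · -- x = v, y ≠ u : triangle x y u
        obtain ⟨p1, hp1⟩ := nxy
        obtain ⟨p2, hp2⟩ := hcc y u my mu hyu
        obtain ⟨p3, hp3⟩ := hcc x u mx mu (fun h => huv h.symm)
        obtain ⟨c, hc1, _, hc3⟩ := triangle hp1 hp2 hp3
        rw [CCset_comm (x := u) (y := x)]
        exact le_trans (Nat.sInf_le hc1) (le_csSup bddCC hc3)
    · by_cases hyu : y = u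
      · subst hyu
        -- y = u, x ≠ v : triangle x y v
        obtain ⟨p1, hp1⟩ := nxy
        obtain ⟨p2, hp2⟩ := hcc y v my mv huv
        obtain ⟨p3, hp3⟩ := hcc x v mx mv hxv
        obtain ⟨c, hc1, hc2, _⟩ := triangle hp1 hp2 hp3
        exact le_trans (Nat.sInf_le hc1) (le_csSup bddCC hc2)
      · by_cases hyv : y = v
        · subst hyv
          -- y = v, x ≠ u : triangle x y u
          obtain ⟨p1, hp1⟩ := nxy
          obtain ⟨p2, hp2⟩ := hcc y u my mu (fun h => huv h.symm)
          obtain ⟨p3, hp3⟩ := hcc x u mx mu hxu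
          obtain ⟨c, hc1, hc2, _⟩ := triangle hp1 hp2 hp3
          rw [CCset_comm (x := u) (y := y)]
          exact le_trans (Nat.sInf_le hc1) (le_csSup bddCC hc2)
        · -- all four distinct
          by_contra hcon
          push_neg at hcon
          set m := sInf (CCset F W x y) with hm
          -- triangle x y u
          obtain ⟨p1, hp1⟩ := nxy
          obtain ⟨p2, hp2⟩ := hcc y u my mu hyu
          obtain ⟨p3, hp3⟩ := hcc x u mx mu hxu
          obtain ⟨c1, hc1xy, _, hc1xu⟩ := triangle hp1 hp2 hp3
          -- triangle x u v
          obtain ⟨q1, hq1⟩ := hcc x u mx mu hxu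
          obtain ⟨q2, hq2⟩ := hcc u v mu mv huv
          obtain ⟨q3, hq3⟩ := hcc x v mx mv hxv
          obtain ⟨c2, hc2xu, hc2uv, hc2xv⟩ := triangle hq1 hq2 hq3
          -- triangle x y v
          obtain ⟨r2, hr2⟩ := hcc y v my mv hyv
          obtain ⟨r3, hr3⟩ := hcc x v mx mv hxv
          obtain ⟨c3, hc3xy, _, hc3xv⟩ := triangle hp1 hr2 hr3
          have hc2m : c2 < m := lt_of_le_of_lt (le_csSup bddCC hc2uv) hcon
          have hmc1 : m ≤ c1 := Nat.sInf_le hc1xy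
          have hmc3 : m ≤ c3 := Nat.sInf_le hc3xy
          have hmxu : m ∈ CCset F W x u :=
            mem_CC_interval ⟨c2, hc2xu⟩
              (le_trans (Nat.sInf_le hc2xu) hc2m.le)
              (le_trans hmc1 (le_csSup bddCC hc1xu))
          have hmxv : m ∈ CCset F W x v :=
            mem_CC_interval ⟨c2, hc2xv⟩
              (le_trans (Nat.sInf_le hc2xv) hc2m.le)
              (le_trans hmc3 (le_csSup bddCC hc3xv))
          have hmuv : m ∈ CCset F W u v := ⟨hmxu.1, hmxu.2.symm.trans hmxv.2⟩
          exact absurd (le_csSup bddCC hmuv) (not_le.mpr hcon)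

lemma card_le_of_agree_off (s : Finset (Conf n)) (P : Finset (Fin n))
    (h : ∀ x ∈ s, ∀ y ∈ s, ∀ a ∉ P, x a = y a) : s.card ≤ 2 ^ P.card := by
  classical
  have hinj : Set.InjOn (fun (x : Conf n) (a : P) => x a.1) s := by
    intro x hx y hy hfeq
    funext a
    by_cases ha : a ∈ P
    · exact congrFun hfeq ⟨a, ha⟩
    · exact h x hx y hy a ha
  calc s.card ≤ (Finset.univ : Finset (P → Bool)).card :=
        Finset.card_le_card_of_injOn _ (fun _ _ => Finset.mem_univ _) hinj
    _ = 2 ^ P.card := by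
        simp [Finset.card_univ]

end Aux

theorem stmt13 {n : ℕ} (F : Conf n → Conf n) (W : List (Finset (Fin n)))
    (hW : isSchedule W) :
    (gnecc F W).cliqueNum ≤ 2 ^ (n / 2) := by
  classical
  have hne0 : {k | ∃ s, (gnecc F W).IsNClique k s}.Nonempty :=
    ⟨0, ∅, SimpleGraph.isNClique_empty.mpr rfl⟩
  refine csSup_le hne0 ?_
  rintro k ⟨s, hs⟩
  rw [← hs.2]
  -- adjacency and nonemptiness of CC sets on the clique
  have hadj : ∀ a ∈ s, ∀ b ∈ s, a ≠ b → (gnecc F W).Adj a b := by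
    intro a ha b hb hab
    exact hs.1 (Finset.mem_coe.mpr ha) (Finset.mem_coe.mpr hb) hab
  have hcc : ∀ a ∈ s, ∀ b ∈ s, a ≠ b → (CCset F W a b).Nonempty := by
    intro a ha b hb hab
    obtain ⟨_, i, hi, he⟩ := hadj a ha b hb hab
    exact ⟨i, hi, he⟩
  -- the common confusion step
  set istar := ((s ×ˢ s).filter fun p => p.1 ≠ p.2).sup
    (fun p => sInf (CCset F W p.1 p.2)) with histar
  have hcommon : ∀ u ∈ s, ∀ v ∈ s, u ≠ v → istar ∈ CCset F W u v := by
    intro u hu v hv huv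
    refine mem_CC_interval (hcc u hu v hv huv) ?_ ?_
    · rw [histar]
      have hmemuv : ((u, v) : Conf n × Conf n) ∈
          (s ×ˢ s).filter (fun p => p.1 ≠ p.2) := by
        simp [Finset.mem_filter, Finset.mem_product, hu, hv, huv]
      exact Finset.le_sup (f := fun p => sInf (CCset F W p.1 p.2)) hmemuv
    · rw [histar]
      refine Finset.sup_le ?_
      rintro ⟨x, y⟩ hmem
      obtain ⟨hprod, hxy⟩ := Finset.mem_filter.mp hmem
      obtain ⟨hx, hy⟩ := Finset.mem_product.mp hprod
      have hsmem : ∀ a : Conf n, a ∈ [x, y, u, v] → a ∈ s := by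
        intro a ha
        simp only [List.mem_cons, List.not_mem_nil, or_false] at ha
        rcases ha with rfl | rfl | rfl | rfl <;> assumption
      exact helly hxy huv
        (fun a b hal hbl hab => hcc a (hsmem a hal) b (hsmem b hbl) hab)
  set P := prefUnion W istar with hPdef
  have hoff : ∀ x ∈ s, ∀ y ∈ s, ∀ a ∉ P, x a = y a := by
    intro x hx y hy a ha
    by_cases hxy : x = y
    · rw [hxy]
    · exact (updSet_eq_iff.mp (hcommon x hx y hy hxy).2).2 a ha
  have hon : ∀ x ∈ s, ∀ y ∈ s, ∀ a ∈ P, F x a = F y a := by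
    intro x hx y hy a ha
    by_cases hxy : x = y
    · rw [hxy]
    · exact (updSet_eq_iff.mp (hcommon x hx y hy hxy).2).1 a ha
  have hFinj : Set.InjOn F s := by
    intro x hx y hy h
    by_contra hxy
    exact (hadj x (Finset.mem_coe.mp hx) y (Finset.mem_coe.mp hy) hxy).1 h
  have bound1 : s.card ≤ 2 ^ P.card := card_le_of_agree_off s P hoff
  have bound2 : s.card ≤ 2 ^ (n - P.card) := by
    have himg : ∀ z ∈ s.image F, ∀ w ∈ s.image F, ∀ a ∉ Pᶜ, z a = w a := by
      intro z hz w hw a ha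
      obtain ⟨x, hx, rfl⟩ := Finset.mem_image.mp hz
      obtain ⟨y, hy, rfl⟩ := Finset.mem_image.mp hw
      exact hon x hx y hy a (by simpa using ha)
    have h2 := card_le_of_agree_off (s.image F) Pᶜ himg
    rw [Finset.card_image_of_injOn hFinj] at h2
    have : Pᶜ.card = n - P.card := by
      rw [Finset.card_compl, Fintype.card_fin]
    rwa [this] at h2
  have hPn : P.card ≤ n := by
    have := Finset.card_le_univ P
    simpa using this
  by_cases hple : P.card ≤ n / 2
  · exact bound1.trans (Nat.pow_le_pow_right (by norm_num) hple)
  · have h2 : n - P.card ≤ n / 2 := by omega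
    exact bound2.trans (Nat.pow_le_pow_right (by norm_num) h2)
end
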